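/- Let K_i < K_{i+1} and K̄ ∈ (K_i, K_{i+1}). Then there exist unique α_i > 0 (determined once β_i is found) and β_i ∈ ℝ such that the density g(x) = α_i e^{β_i x} on [K_i, K_{i+1}) satisfies ∫_{K_i}^{K_{i+1}} g(x) dx = M and ∫_{K_i}^{K_{i+1}} x g(x) dx = K̄ · M, for any given M > 0. -/

import Mathlib

open Real MeasureTheory

private noncomputable def Jfun (A B β : ℝ) : ℝ := ∫ u in A..B, u * Real.exp (β * u)

private lemma Jint (β a b : ℝ) :
    IntervalIntegrable (fun u => u * Real.exp (β * u)) volume a b :=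
  (continuous_id.mul ((continuous_const.mul continuous_id).rexp)).intervalIntegrable a b

private lemma J_cont (A B : ℝ) : Continuous (fun β => Jfun A B β) := by
  apply intervalIntegral.continuous_parametric_intervalIntegral_of_continuous' (μ := volume)
  exact continuous_snd.mul ((continuous_fst.mul continuous_snd).rexp)

private lemma J_mono (A B : ℝ) (hA : A < 0) (hB : 0 < B) :
    StrictMono (fun β => Jfun A B β) := by
  intro β1 β2 h
  have hsub : Jfun A B β2 - Jfun A B β1
      = ∫ u in A..B, u * (Real.exp (β2 * u) - Real.exp (β1 * u)) := by
    rw [Jfun, Jfun, ← intervalIntegral.integral_sub (Jint β2 A B) (Jint β1 A B)]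
    congr 1; ext u; ring
  set g : ℝ → ℝ := fun u => u * (Real.exp (β2 * u) - Real.exp (β1 * u)) with hg
  have hgint : ∀ a b : ℝ, IntervalIntegrable g volume a b := fun a b =>
    (continuous_id.mul (((continuous_const.mul continuous_id).rexp).sub
      ((continuous_const.mul continuous_id).rexp))).intervalIntegrable a b
  have h1 : 0 < ∫ u in A..(0:ℝ), g u := by
    apply intervalIntegral.intervalIntegral_pos_of_pos_on (hgint A 0) _ hA
    intro u hu
    have hu0 : u < 0 := hu.2
    have h' : β2 * u < β1 * u := by nlinarith
    have he := Real.exp_lt_exp.2 h'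
    simpa [hg] using mul_pos_of_neg_of_neg hu0 (by linarith : Real.exp (β2 * u) - Real.exp (β1 * u) < 0)
  have h2 : 0 < ∫ u in (0:ℝ)..B, g u := by
    apply intervalIntegral.intervalIntegral_pos_of_pos_on (hgint 0 B) _ hB
    intro u hu
    have hu0 : 0 < u := hu.1
    have h' : β1 * u < β2 * u := by nlinarith
    have he := Real.exp_lt_exp.2 h'
    simpa [hg] using mul_pos hu0 (by linarith : (0:ℝ) < Real.exp (β2 * u) - Real.exp (β1 * u))
  have hsplit : (∫ u in A..(0:ℝ), g u) + (∫ u in (0:ℝ)..B, g u) = ∫ u in A..B, g u :=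
    intervalIntegral.integral_add_adjacent_intervals (hgint A 0) (hgint 0 B)
  simp only
  nlinarith [hsub]

private lemma J_pos (A B : ℝ) (hA : A < 0) (hB : 0 < B) : ∃ β, 0 < Jfun A B β := by
  set c : ℝ := 2 * A ^ 2 / B ^ 2 + 1 with hc
  have hc1 : 1 ≤ c := by
    rw [hc]
    have : 0 ≤ 2 * A ^ 2 / B ^ 2 := by positivity
    linarith
  set β : ℝ := 2 * Real.log c / B with hβ
  have hβ0 : 0 ≤ β := by
    rw [hβ]
    exact div_nonneg (by linarith [Real.log_nonneg hc1]) hB.le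
  have hexp : Real.exp (β * (B / 2)) = c := by
    have : β * (B / 2) = Real.log c := by rw [hβ]; field_simp
    rw [this, Real.exp_log (by linarith)]
  refine ⟨β, ?_⟩
  -- lower bound on A..0
  have h1 : (-(A ^ 2) / 2) ≤ ∫ u in A..(0:ℝ), u * Real.exp (β * u) := by
    have : (∫ u in A..(0:ℝ), u) ≤ ∫ u in A..(0:ℝ), u * Real.exp (β * u) := by
      apply intervalIntegral.integral_mono_on hA.le
        (continuous_id.intervalIntegrable A 0) (Jint β A 0)
      intro u hu
      have hu0 : u ≤ 0 := hu.2
      have he : Real.exp (β * u) ≤ 1 := by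
        rw [← Real.exp_zero]; exact Real.exp_le_exp.2 (by nlinarith)
      show u ≤ u * Real.exp (β * u)
      nlinarith [Real.exp_pos (β * u)]
    have hid : (∫ u in A..(0:ℝ), u) = -(A ^ 2) / 2 := by
      rw [integral_id]; ring
    linarith [hid ▸ this]
  -- nonneg on 0..B/2
  have h2 : (0:ℝ) ≤ ∫ u in (0:ℝ)..(B/2), u * Real.exp (β * u) := by
    apply intervalIntegral.integral_nonneg (by linarith)
    intro u hu
    have := hu.1
    positivity
  -- lower bound on B/2..B
  have h3 : B ^ 2 / 4 * c ≤ ∫ u in (B/2)..B, u * Real.exp (β * u) := by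
    have hmono : (∫ u in (B/2)..B, (B / 2) * Real.exp (β * (B / 2)))
        ≤ ∫ u in (B/2)..B, u * Real.exp (β * u) := by
      apply intervalIntegral.integral_mono_on (by linarith)
        (intervalIntegrable_const) (Jint β (B/2) B)
      intro u hu
      have h1u : B / 2 ≤ u := hu.1
      have he : Real.exp (β * (B / 2)) ≤ Real.exp (β * u) :=
        Real.exp_le_exp.2 (by nlinarith)
      nlinarith [Real.exp_pos (β * (B / 2))]
    have hconst : (∫ u in (B/2)..B, (B / 2) * Real.exp (β * (B / 2)))
        = B ^ 2 / 4 * c := by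
      rw [intervalIntegral.integral_const, hexp, smul_eq_mul]; ring
    linarith [hconst ▸ hmono]
  have hsplit1 : (∫ u in A..(0:ℝ), u * Real.exp (β * u))
      + (∫ u in (0:ℝ)..B, u * Real.exp (β * u)) = Jfun A B β :=
    intervalIntegral.integral_add_adjacent_intervals (Jint β A 0) (Jint β 0 B)
  have hsplit2 : (∫ u in (0:ℝ)..(B/2), u * Real.exp (β * u))
      + (∫ u in (B/2)..B, u * Real.exp (β * u))
      = ∫ u in (0:ℝ)..B, u * Real.exp (β * u) :=
    intervalIntegral.integral_add_adjacent_intervals (Jint β 0 (B/2)) (Jint β (B/2) B)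
  have hcval : B ^ 2 / 4 * c = A ^ 2 / 2 + B ^ 2 / 4 := by
    field_simp [hc]; linear_combination (2*B^2) * hc + 2 * div_mul_cancel₀ (2*A^2) (pow_ne_zero 2 hB.ne')
  nlinarith [hsplit1, hsplit2]

private lemma J_neg (A B : ℝ) (hA : A < 0) (hB : 0 < B) : ∃ β, Jfun A B β < 0 := by
  obtain ⟨γ, hγ⟩ := J_pos (-B) (-A) (by linarith) (by linarith)
  refine ⟨-γ, ?_⟩
  have hrefl : Jfun A B (-γ) = -Jfun (-B) (-A) γ := by
    rw [Jfun, Jfun]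
    have : ∀ u : ℝ, u * Real.exp (-γ * u) = (fun v => -(v * Real.exp (γ * v))) (-u) := by
      intro u; simp
    rw [intervalIntegral.integral_congr (fun u _ => this u),
      intervalIntegral.integral_comp_neg (fun v => -(v * Real.exp (γ * v))),
      intervalIntegral.integral_neg]
  rw [hrefl]; linarith

theorem exists_unique_exponential_density (Ki Ki1 Kbar M : ℝ) (hK : Ki < Ki1)
    (hKbar : Kbar ∈ Set.Ioo Ki Ki1) (hM : 0 < M) :
    ∃! p : ℝ × ℝ, 0 < p.1 ∧
      (∫ x in Ki..Ki1, p.1 * Real.exp (p.2 * x)) = M ∧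
      (∫ x in Ki..Ki1, x * (p.1 * Real.exp (p.2 * x))) = Kbar * M := by
  obtain ⟨hK1, hK2⟩ := hKbar
  set A : ℝ := Ki - Kbar with hAdef
  set B : ℝ := Ki1 - Kbar with hBdef
  have hA : A < 0 := by simp [hAdef]; linarith
  have hB : 0 < B := by simp [hBdef]; linarith
  -- key translation lemma
  have key : ∀ γ : ℝ, (∫ x in Ki..Ki1, (x - Kbar) * Real.exp (γ * x))
      = Real.exp (γ * Kbar) * Jfun A B γ := by
    intro γ
    have h1 : ∀ x : ℝ, (x - Kbar) * Real.exp (γ * x)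
        = (fun u => u * Real.exp (γ * u) * Real.exp (γ * Kbar)) (x - Kbar) := by
      intro x
      simp only
      rw [mul_assoc, ← Real.exp_add]
      ring_nf
    rw [intervalIntegral.integral_congr (fun x _ => h1 x),
      intervalIntegral.integral_comp_sub_right (fun u => u * Real.exp (γ * u) * Real.exp (γ * Kbar)) Kbar,
      intervalIntegral.integral_mul_const]
    rw [Jfun]; ring
  -- integrability facts
  have hIexp : ∀ γ : ℝ, IntervalIntegrable (fun x => Real.exp (γ * x)) volume Ki Ki1 :=
    fun γ => ((continuous_const.mul continuous_id).rexp).intervalIntegrable Ki Ki1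
  have hIxexp : ∀ γ : ℝ, IntervalIntegrable (fun x => x * Real.exp (γ * x)) volume Ki Ki1 :=
    fun γ => Jint γ Ki Ki1
  have hIpos : ∀ γ : ℝ, 0 < ∫ x in Ki..Ki1, Real.exp (γ * x) := fun γ =>
    intervalIntegral.intervalIntegral_pos_of_pos (hIexp γ) (fun x => Real.exp_pos _) hK
  -- relation: ∫ x e^{γx} - Kbar ∫ e^{γx} = e^{γKbar} J γ
  have rel : ∀ γ : ℝ, (∫ x in Ki..Ki1, x * Real.exp (γ * x))
      - Kbar * (∫ x in Ki..Ki1, Real.exp (γ * x)) = Real.exp (γ * Kbar) * Jfun A B γ := by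
    intro γ
    rw [← key γ, ← intervalIntegral.integral_const_mul,
      ← intervalIntegral.integral_sub (hIxexp γ) ((hIexp γ).const_mul Kbar)]
    congr 1; ext x; ring
  -- find root β of J
  obtain ⟨b1, hb1⟩ := J_neg A B hA hB
  obtain ⟨b2, hb2⟩ := J_pos A B hA hB
  have hb12 : b1 ≤ b2 := by
    by_contra hcon
    exact absurd (J_mono A B hA hB (lt_of_not_ge hcon)) (by simp only; linarith)
  obtain ⟨β, _, hβ0⟩ := intermediate_value_Icc hb12 (J_cont A B).continuousOn
    (Set.mem_Icc.2 ⟨hb1.le, hb2.le⟩)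
  have hβ : Jfun A B β = 0 := hβ0
  -- construct α
  set I : ℝ := ∫ x in Ki..Ki1, Real.exp (β * x) with hIdef
  have hI : 0 < I := hIpos β
  have hxint : (∫ x in Ki..Ki1, x * Real.exp (β * x)) = Kbar * I := by
    have := rel β
    rw [hβ] at this
    simp at this
    linarith
  refine ⟨(M / I, β), ⟨by positivity, ?_, ?_⟩, ?_⟩
  · rw [intervalIntegral.integral_const_mul, ← hIdef]
    field_simp
  · have : (∫ x in Ki..Ki1, x * (M / I * Real.exp (β * x)))
        = M / I * ∫ x in Ki..Ki1, x * Real.exp (β * x) := by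
      rw [← intervalIntegral.integral_const_mul]
      congr 1; ext x; ring
    rw [this, hxint]
    field_simp
  · rintro ⟨a, b⟩ ⟨ha, h1, h2⟩
    have ha1 : a * (∫ x in Ki..Ki1, Real.exp (b * x)) = M := by
      rw [← intervalIntegral.integral_const_mul]; exact h1
    have ha2 : a * (∫ x in Ki..Ki1, x * Real.exp (b * x)) = Kbar * M := by
      rw [← intervalIntegral.integral_const_mul, ← h2]
      congr 1; ext x; ring
    have hJb : Jfun A B b = 0 := by
      have hrel := rel b
      have hz : a * ((∫ x in Ki..Ki1, x * Real.exp (b * x))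
          - Kbar * (∫ x in Ki..Ki1, Real.exp (b * x))) = 0 := by
        linear_combination ha2 - Kbar * ha1
      have hsum : (∫ x in Ki..Ki1, x * Real.exp (b * x))
          - Kbar * (∫ x in Ki..Ki1, Real.exp (b * x)) = 0 := by
        rcases mul_eq_zero.1 hz with h | h
        · exact absurd h (ne_of_gt ha)
        · exact h
      rw [hsum] at hrel
      have := Real.exp_pos (b * Kbar)
      nlinarith
    have hbβ : b = β := (J_mono A B hA hB).injective (by rw [hJb, hβ])
    have haα : a = M / I := by
      rw [hbβ] at ha1
      rw [← hIdef] at ha1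
      field_simp
      linarith
    simp [haα, hbβ]
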